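/- Let a, λ ∈ ℝⁿ with ‖a‖ = ‖λ‖ = 1, d ∈ ℝᵐ with ‖d‖ ≤ 1, y ∈ ℝᵐ, and θ ≥ 0. If ‖x‖ ≤ ‖y‖ and aᵀx + dᵀy ≤ 0, then λᵀ(x + aθ) ≤ ‖y − dθ‖. -/
import Mathlib

open RealInnerProductSpace

theorem key_freeness_inequality {n m : ℕ}
    (a lam : EuclideanSpace ℝ (Fin n)) (d : EuclideanSpace ℝ (Fin m))
    (hlam : ‖lam‖ = 1) (had : ‖a‖ ≤ ‖d‖)
    (x : EuclideanSpace ℝ (Fin n)) (y : EuclideanSpace ℝ (Fin m))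
    (θ : ℝ) (hθ : 0 ≤ θ)
    (hxy : ‖x‖ ≤ ‖y‖) (hlin : ⟪a, x⟫ + ⟪d, y⟫ ≤ 0) :
    ⟪lam, x + θ • a⟫ ≤ ‖y - θ • d‖ := by
  have h1 : ⟪lam, x + θ • a⟫ ≤ ‖x + θ • a‖ := by
    calc ⟪lam, x + θ • a⟫ ≤ ‖lam‖ * ‖x + θ • a‖ := real_inner_le_norm _ _
    _ = ‖x + θ • a‖ := by rw [hlam, one_mul]
  refine h1.trans ?_
  rw [← Real.sqrt_sq (norm_nonneg (x + θ • a)), ← Real.sqrt_sq (norm_nonneg (y - θ • d))]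
  apply Real.sqrt_le_sqrt
  have e1 : ‖x + θ • a‖ ^ 2 = ‖x‖ ^ 2 + 2 * (θ * ⟪x, a⟫) + θ ^ 2 * ‖a‖ ^ 2 := by
    rw [norm_add_sq_real, real_inner_smul_right, norm_smul]
    simp [abs_of_nonneg hθ, mul_pow]
  have e2 : ‖y - θ • d‖ ^ 2 = ‖y‖ ^ 2 - 2 * (θ * ⟪y, d⟫) + θ ^ 2 * ‖d‖ ^ 2 := by
    rw [norm_sub_sq_real, real_inner_smul_right, norm_smul]
    simp [abs_of_nonneg hθ, mul_pow]
  rw [e1, e2]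
  have hax : ⟪x, a⟫ = ⟪a, x⟫ := real_inner_comm _ _
  have hdy : ⟪y, d⟫ = ⟪d, y⟫ := real_inner_comm _ _
  have h2 : ‖x‖ ^ 2 ≤ ‖y‖ ^ 2 := by nlinarith [norm_nonneg x]
  have h3 : ‖a‖ ^ 2 ≤ ‖d‖ ^ 2 := by nlinarith [norm_nonneg a]
  have h4 : θ ^ 2 * ‖a‖ ^ 2 ≤ θ ^ 2 * ‖d‖ ^ 2 := mul_le_mul_of_nonneg_left h3 (sq_nonneg θ)
  nlinarith [mul_le_mul_of_nonneg_left hlin hθ]
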